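/- Let ξ : [a,b] → ℝ^d be continuously differentiable, let Q ≥ 0 satisfy |ξ'(θ) − ξ'(θ')| ≤ Q for all θ, θ' ∈ [a,b], and let τ* ∈ [a,b] be a point minimizing τ ↦ |ξ(τ)| over [a,b]. Then for every τ ∈ [a,b], |ξ(τ)| ≥ |τ − τ*| · (|ξ'(τ*)| − Q). -/

import Mathlib

theorem characteristic_lower_bound (d : ℕ) (a b Q : ℝ) (hab : a ≤ b)
    (ξ ξ' : ℝ → EuclideanSpace ℝ (Fin d))
    (hderiv : ∀ t ∈ Set.Icc a b, HasDerivAt ξ (ξ' t) t)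
    (hcont : ContinuousOn ξ' (Set.Icc a b))
    (hQ : 0 ≤ Q)
    (hosc : ∀ θ ∈ Set.Icc a b, ∀ θ' ∈ Set.Icc a b, ‖ξ' θ - ξ' θ'‖ ≤ Q)
    (τs : ℝ) (hτs : τs ∈ Set.Icc a b)
    (hmin : ∀ τ ∈ Set.Icc a b, ‖ξ τs‖ ≤ ‖ξ τ‖) :
    ∀ τ ∈ Set.Icc a b, |τ - τs| * (‖ξ' τs‖ - Q) ≤ ‖ξ τ‖ := by
  intro τ hτ
  set c : ℝ := τ - τs with hc
  set v := ξ' τs with hv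
  -- Step 1: Taylor bound
  have taylor : ‖ξ τ - ξ τs - c • v‖ ≤ Q * |c| := by
    have h1 : ∀ x ∈ Set.Icc a b,
        HasDerivWithinAt (fun t => ξ t - t • v) (ξ' x - v) (Set.Icc a b) x := by
      intro x hx
      exact (((hderiv x hx).sub ((hasDerivAt_id x).smul_const v)).congr_deriv (by simp)).hasDerivWithinAt (s := Set.Icc a b)
    have h2 : ∀ x ∈ Set.Icc a b, ‖ξ' x - v‖ ≤ Q := fun x hx => hosc x hx τs hτs
    have := (convex_Icc a b).norm_image_sub_le_of_norm_hasDerivWithin_le h1 h2 hτs hτ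
    have h3 : (ξ τ - τ • v) - (ξ τs - τs • v) = ξ τ - ξ τs - c • v := by
      rw [hc, sub_smul]; abel
    rw [h3] at this
    simpa [Real.norm_eq_abs, hc] using this
  -- Step 2: sign of inner product
  have hsign : 0 ≤ c * (inner ℝ (ξ τs) v : ℝ) := by
    -- derivative of t ↦ ‖ξ t‖² at τs within Icc
    have hg : HasFDerivWithinAt (fun t : ℝ => (inner ℝ (ξ t) (ξ t) : ℝ))
        ((1 : ℝ →L[ℝ] ℝ).smulRight ((inner ℝ (ξ τs) v : ℝ) + (inner ℝ v (ξ τs) : ℝ)))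
        (Set.Icc a b) τs := by
      have := ((hderiv τs hτs).inner ℝ (hderiv τs hτs)).hasDerivWithinAt
        (s := Set.Icc a b)
      exact this.hasFDerivWithinAt
    have hminOn : IsLocalMinOn (fun t : ℝ => (inner ℝ (ξ t) (ξ t) : ℝ)) (Set.Icc a b) τs := by
      apply Filter.Eventually.filter_mono (nhdsWithin_mono τs (le_refl _))
      filter_upwards [self_mem_nhdsWithin] with t ht
      have h1 := hmin t ht
      have := mul_self_le_mul_self (norm_nonneg (ξ τs)) h1
      show (inner ℝ (ξ τs) (ξ τs) : ℝ) ≤ (inner ℝ (ξ t) (ξ t) : ℝ)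
      rw [real_inner_self_eq_norm_mul_norm, real_inner_self_eq_norm_mul_norm]
      exact this
    have hcone : c ∈ posTangentConeAt (Set.Icc a b) τs := by
      apply sub_mem_posTangentConeAt_of_segment_subset
      exact (convex_Icc a b).segment_subset hτs hτ
    have := hminOn.hasFDerivWithinAt_nonneg hg hcone
    have hsymm : (inner ℝ v (ξ τs) : ℝ) = (inner ℝ (ξ τs) v : ℝ) := real_inner_comm _ _
    simp only [ContinuousLinearMap.smulRight_apply, ContinuousLinearMap.one_apply,
      smul_eq_mul, hsymm] at this
    nlinarith [this]
  -- Step 3: ‖ξ τs + c • v‖ ≥ |c| ‖v‖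
  have hlow : |c| * ‖v‖ ≤ ‖ξ τs + c • v‖ := by
    have hsq : (|c| * ‖v‖) ^ 2 ≤ ‖ξ τs + c • v‖ ^ 2 := by
      rw [norm_add_sq_real, real_inner_smul_right, norm_smul, Real.norm_eq_abs]
      nlinarith [sq_nonneg (‖ξ τs‖), sq_abs c]
    calc |c| * ‖v‖ = Real.sqrt ((|c| * ‖v‖) ^ 2) := (Real.sqrt_sq (by positivity)).symm
      _ ≤ Real.sqrt (‖ξ τs + c • v‖ ^ 2) := Real.sqrt_le_sqrt hsq
      _ = ‖ξ τs + c • v‖ := Real.sqrt_sq (norm_nonneg _)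
  -- Conclusion
  have htri : ‖ξ τs + c • v‖ - ‖ξ τ‖ ≤ ‖ξ τ - ξ τs - c • v‖ := by
    have := norm_sub_norm_le (ξ τs + c • v) (ξ τ)
    have heq : ξ τs + c • v - ξ τ = -(ξ τ - ξ τs - c • v) := by abel
    rw [heq, norm_neg] at this
    linarith
  have : |c| * (‖v‖ - Q) = |c| * ‖v‖ - Q * |c| := by ring
  rw [hv] at *
  linarith [taylor, hlow, htri]
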